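/- Let q = 2^ℓ. The number of pairs (a, b) with 0 ≤ a, b ≤ q − 1 such that the complement of the binary-digit set of a (within ℓ bits) is contained in the binary-digit set of b is exactly 3^ℓ. Consequently, the number of 'good' monomials X^a Y^b (those that restrict to degree < q−1 on all simple lines, including the special case a = b = q−1) is q² − 3^ℓ + 1. -/

import Mathlib

open Finset

lemma count_aux (ℓ : ℕ) :
    ((Finset.range (2 ^ ℓ) ×ˢ Finset.range (2 ^ ℓ)).filter
        (fun p : ℕ × ℕ => ∀ i < ℓ, p.1.testBit i = false → p.2.testBit i = true)).card
      = 3 ^ ℓ := by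
  induction ℓ with
  | zero => decide
  | succ ℓ ih =>
    set T : Finset (ℕ × ℕ) := {(0, 1), (1, 0), (1, 1)} with hT
    have hTcard : T.card = 3 := by decide
    have key :
        ((Finset.range (2 ^ (ℓ + 1)) ×ˢ Finset.range (2 ^ (ℓ + 1))).filter
            (fun p : ℕ × ℕ => ∀ i < ℓ + 1, p.1.testBit i = false → p.2.testBit i = true)).card
          = (T ×ˢ ((Finset.range (2 ^ ℓ) ×ˢ Finset.range (2 ^ ℓ)).filter
              (fun p : ℕ × ℕ => ∀ i < ℓ, p.1.testBit i = false → p.2.testBit i = true))).card := by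
      apply Finset.card_nbij'
        (i := fun p => ((p.1 / 2 ^ ℓ, p.2 / 2 ^ ℓ), (p.1 % 2 ^ ℓ, p.2 % 2 ^ ℓ)))
        (j := fun q => (2 ^ ℓ * q.1.1 + q.2.1, 2 ^ ℓ * q.1.2 + q.2.2))
      · -- forward maps into target
        intro p hp
        simp only [Finset.coe_filter, Set.mem_setOf_eq, Finset.mem_product, Finset.mem_range] at hp
        obtain ⟨⟨ha, hb⟩, hP⟩ := hp
        have h2 : (2 : ℕ) ^ (ℓ + 1) = 2 ^ ℓ * 2 := by ring
        have hda : p.1 / 2 ^ ℓ < 2 := Nat.div_lt_of_lt_mul (by omega)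
        have hdb : p.2 / 2 ^ ℓ < 2 := Nat.div_lt_of_lt_mul (by omega)
        have hbitA : p.1.testBit ℓ = decide (p.1 / 2 ^ ℓ = 1) := by
          rw [Nat.testBit_eq_decide_div_mod_eq, Nat.mod_eq_of_lt hda]
        have hbitB : p.2.testBit ℓ = decide (p.2 / 2 ^ ℓ = 1) := by
          rw [Nat.testBit_eq_decide_div_mod_eq, Nat.mod_eq_of_lt hdb]
        have hhi := hP ℓ (Nat.lt_succ_self ℓ)
        rw [hbitA, hbitB] at hhi
        simp only [Finset.mem_coe, Finset.mem_product, Finset.mem_filter, Finset.mem_range]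
        refine ⟨?_, ⟨Nat.mod_lt _ (Nat.pow_pos (by norm_num : 0 < 2)),
            Nat.mod_lt _ (Nat.pow_pos (by norm_num : 0 < 2))⟩, ?_⟩
        · -- high bits in T
          have hor : p.1 / 2 ^ ℓ = 1 ∨ p.2 / 2 ^ ℓ = 1 := by
            by_contra hcon
            push_neg at hcon
            have := hhi (by simp [hcon.1])
            simp [hcon.2] at this
          simp only [hT, Finset.mem_insert, Finset.mem_singleton, Prod.mk.injEq]
          revert hor hda hdb
          generalize p.1 / 2 ^ ℓ = A
          generalize p.2 / 2 ^ ℓ = B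
          intros
          omega
        · intro i hi hfa
          rw [Nat.testBit_mod_two_pow] at hfa ⊢
          simp [hi] at hfa ⊢
          exact hP i (by omega) hfa
      · -- backward maps into source
        intro q hq
        simp only [Finset.mem_coe, Finset.mem_product, Finset.mem_filter, Finset.mem_range] at hq
        obtain ⟨hqT, ⟨hx, hy⟩, hP⟩ := hq
        have hq1 : q.1.1 < 2 ∧ q.1.2 < 2 ∧ (q.1.1 = 1 ∨ q.1.2 = 1) := by
          simp only [hT, Finset.mem_insert, Finset.mem_singleton, Prod.ext_iff] at hqT
          omega
        simp only [Finset.mem_coe, Finset.mem_filter, Finset.mem_product, Finset.mem_range]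
        have h2 : (2 : ℕ) ^ (ℓ + 1) = 2 ^ ℓ * 2 := by ring
        obtain ⟨hq11, hq12, hq13⟩ := hq1
        have hlt1 : 2 ^ ℓ * q.1.1 + q.2.1 < 2 ^ (ℓ + 1) := by
          rcases (by omega : q.1.1 = 0 ∨ q.1.1 = 1) with h | h <;>
            rw [h] <;> simp only [Nat.mul_one, Nat.mul_zero] <;> omega
        have hlt2 : 2 ^ ℓ * q.1.2 + q.2.2 < 2 ^ (ℓ + 1) := by
          rcases (by omega : q.1.2 = 0 ∨ q.1.2 = 1) with h | h <;>
            rw [h] <;> simp only [Nat.mul_one, Nat.mul_zero] <;> omega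
        refine ⟨⟨hlt1, hlt2⟩, ?_⟩
        intro i hi
        rcases Nat.lt_or_ge i ℓ with hlt | hge
        · rw [Nat.testBit_two_pow_mul_add _ hx, Nat.testBit_two_pow_mul_add _ hy]
          simp only [hlt, if_pos]
          exact hP i hlt
        · have hieq : i = ℓ := by omega
          subst hieq
          rw [Nat.testBit_two_pow_mul_add _ hx, Nat.testBit_two_pow_mul_add _ hy]
          simp only [lt_irrefl, if_neg, Nat.sub_self, if_false]
          intro h1
          rcases hq13 with h | h
          · rw [h] at h1; simp at h1
          · rw [h]; simp
      · -- left inverse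
        intro p hp
        simp only
        rw [Nat.mul_comm, Nat.div_add_mod, Nat.mul_comm, Nat.div_add_mod]
      · -- right inverse
        intro q hq
        simp only [Finset.mem_coe, Finset.mem_product, Finset.mem_filter, Finset.mem_range] at hq
        obtain ⟨hqT, ⟨hx, hy⟩, _⟩ := hq
        have hd1 : (2 ^ ℓ * q.1.1 + q.2.1) / 2 ^ ℓ = q.1.1 := by
          rw [Nat.mul_add_div (Nat.pow_pos (by norm_num : 0 < 2)),
            Nat.div_eq_of_lt hx, Nat.add_zero]
        have hd2 : (2 ^ ℓ * q.1.2 + q.2.2) / 2 ^ ℓ = q.1.2 := by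
          rw [Nat.mul_add_div (Nat.pow_pos (by norm_num : 0 < 2)),
            Nat.div_eq_of_lt hy, Nat.add_zero]
        have hm1 : (2 ^ ℓ * q.1.1 + q.2.1) % 2 ^ ℓ = q.2.1 := by
          rw [Nat.mul_add_mod, Nat.mod_eq_of_lt hx]
        have hm2 : (2 ^ ℓ * q.1.2 + q.2.2) % 2 ^ ℓ = q.2.2 := by
          rw [Nat.mul_add_mod, Nat.mod_eq_of_lt hy]
        simp [hd1, hd2, hm1, hm2]
    rw [key, Finset.card_product, hTcard, ih]
    ring

/-- Counting good monomials: the number of pairs `(a, b)` with `0 ≤ a, b ≤ q - 1`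
such that the complement (within `ℓ` bits) of the binary-digit set of `a` is
contained in the binary-digit set of `b` is exactly `3^ℓ`.  Consequently, the
number of good monomials (those with `(a,b) = (q-1, q-1)` or failing this
containment) is `q² - 3^ℓ + 1`. -/
theorem count_good_monomials (ℓ q : ℕ) (hq : q = 2 ^ ℓ) :
    (((Finset.range q ×ˢ Finset.range q).filter
        (fun p => ∀ i < ℓ, p.1.testBit i = false → p.2.testBit i = true)).card = 3 ^ ℓ) ∧
    (((Finset.range q ×ˢ Finset.range q).filter
        (fun p => p = (q - 1, q - 1) ∨
          ¬ (∀ i < ℓ, p.1.testBit i = false → p.2.testBit i = true))).card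
      = q ^ 2 - 3 ^ ℓ + 1) := by
  subst hq
  have h1 := count_aux ℓ
  refine ⟨h1, ?_⟩
  set q := 2 ^ ℓ with hq
  set S := Finset.range q ×ˢ Finset.range q with hS
  set Q : ℕ × ℕ → Prop := fun p => ∀ i < ℓ, p.1.testBit i = false → p.2.testBit i = true
    with hQ
  have hxS : ((q - 1, q - 1) : ℕ × ℕ) ∈ S := by
    simp only [hS, Finset.mem_product, Finset.mem_range]
    have : 0 < q := Nat.pow_pos (by norm_num : 0 < 2)
    omega
  have hxQ : Q (q - 1, q - 1) := by
    intro i hi hfa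
    rw [hq] at hfa
    simp [hi] at hfa
  have hsplit : S.filter (fun p => p = (q - 1, q - 1) ∨ ¬ Q p)
      = insert ((q - 1, q - 1) : ℕ × ℕ) (S.filter (fun p => ¬ Q p)) := by
    ext p
    simp only [Finset.mem_filter, Finset.mem_insert]
    constructor
    · rintro ⟨hpS, h | h⟩
      · exact Or.inl h
      · exact Or.inr ⟨hpS, h⟩
    · rintro (h | ⟨hpS, h⟩)
      · subst h; exact ⟨hxS, Or.inl rfl⟩
      · exact ⟨hpS, Or.inr h⟩
  have hnotmem : ((q - 1, q - 1) : ℕ × ℕ) ∉ S.filter (fun p => ¬ Q p) := by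
    simp only [Finset.mem_filter, not_and, not_not]
    intro _
    exact hxQ
  have hcardnot : (S.filter (fun p => ¬ Q p)).card = q ^ 2 - 3 ^ ℓ := by
    have hsum := Finset.card_filter_add_card_filter_not (s := S) (p := Q)
    have hScard : S.card = q ^ 2 := by
      simp [hS, Finset.card_product, sq]
    have hfq : (S.filter Q).card = 3 ^ ℓ := h1
    omega
  rw [hsplit, Finset.card_insert_of_notMem hnotmem, hcardnot]
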